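/- Let F be a finite confluence. A subset C ⊆ F is the range of a closure operator on F if and only if C is closed under local meet, i.e., for every t ∈ F, C ∩ F^t is closed under the meet operation of the lattice F^t (in particular the top element of F^t lies in C). In that case the closure operator is given by f(t) = the meet, in F^t, of all elements of C ∩ F^t. -/

import Mathlib

/-- In a finite confluence, a subset is the range of a closure operator iff it
is closed under local meet; the closure operator then sends `t` to the meet in
`F^t` of all elements of `C ∩ F^t`. -/
theorem closure_subset_iff_closed_under_local_meet
    {F : Type*} [PartialOrder F] [Finite F]
    (hconf : ∀ t x y : F, t ≤ x → t ≤ y →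
      (∃ m, IsGreatest {z | t ≤ z ∧ z ≤ x ∧ z ≤ y} m) ∧
      (∃ j, IsLeast {z | t ≤ z ∧ x ≤ z ∧ y ≤ z} j))
    (C : Set F) :
    ((∃ f : F → F, Monotone f ∧ (∀ x, f (f x) = f x) ∧ (∀ x, x ≤ f x) ∧
        Set.range f = C) ↔
      ((∀ t : F, ∀ T : F, IsGreatest {z | t ≤ z} T → T ∈ C) ∧
       (∀ t : F, ∀ x ∈ C, ∀ y ∈ C, t ≤ x → t ≤ y →
        ∀ m, IsGreatest {z | t ≤ z ∧ z ≤ x ∧ z ≤ y} m → m ∈ C))) ∧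
    (∀ f : F → F, Monotone f → (∀ x, f (f x) = f x) → (∀ x, x ≤ f x) →
      Set.range f = C → ∀ t : F,
        IsGreatest {z | t ≤ z ∧ ∀ c ∈ C, t ≤ c → z ≤ c} (f t)) := by
  constructor
  · constructor
    · rintro ⟨f, hmono, hidem, hext, hrange⟩
      have hfix : ∀ c ∈ C, f c = c := by
        intro c hc
        rw [← hrange] at hc
        obtain ⟨c', rfl⟩ := hc
        exact hidem c'
      constructor
      · intro t T hT
        have h1 : f T ∈ {z | t ≤ z} := le_trans hT.1 (hext T)
        have h2 : f T = T := le_antisymm (hT.2 h1) (hext T)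
        rw [← hrange]
        exact ⟨T, h2⟩
      · intro t x hx y hy htx hty m hm
        obtain ⟨⟨htm, hmx, hmy⟩, hub⟩ := hm
        have h1 : f m ∈ {z | t ≤ z ∧ z ≤ x ∧ z ≤ y} := by
          refine ⟨le_trans htm (hext m), ?_, ?_⟩
          · calc f m ≤ f x := hmono hmx
              _ = x := hfix x hx
          · calc f m ≤ f y := hmono hmy
              _ = y := hfix y hy
        have h2 : f m = m := le_antisymm (hub h1) (hext m)
        rw [← hrange]
        exact ⟨m, h2⟩
    · rintro ⟨htop, hmeet⟩
      have hleast : ∀ t : F, ∃ m, IsLeast {c | c ∈ C ∧ t ≤ c} m := by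
        intro t
        -- the up-set F^t has a greatest element
        have htopex : ∃ T, IsGreatest {z | t ≤ z} T := by
          obtain ⟨M, hM, hMmax⟩ := Set.Finite.exists_maximalFor id {z | t ≤ z}
            (Set.toFinite _) ⟨t, le_refl t⟩
          refine ⟨M, hM, fun x hx => ?_⟩
          obtain ⟨-, ⟨j, hj⟩⟩ := hconf t M x hM hx
          have hjM : M = j := le_antisymm hj.1.2.1 (hMmax hj.1.1 hj.1.2.1)
          rw [hjM]; exact hj.1.2.2
        obtain ⟨T, hT⟩ := htopex
        have hne : ({c | c ∈ C ∧ t ≤ c} : Set F).Nonempty := ⟨T, htop t T hT, hT.1⟩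
        obtain ⟨m, hm, hmmin⟩ := Set.Finite.exists_minimalFor id {c | c ∈ C ∧ t ≤ c}
          (Set.toFinite _) hne
        refine ⟨m, hm, fun c hc => ?_⟩
        obtain ⟨⟨m', hm'⟩, -⟩ := hconf t m c hm.2 hc.2
        have hm'C : m' ∈ C := hmeet t m hm.1 c hc.1 hm.2 hc.2 m' hm'
        have : m = m' := le_antisymm (hmmin ⟨hm'C, hm'.1.1⟩ hm'.1.2.1) hm'.1.2.1
        rw [this]; exact hm'.1.2.2
      choose f hf using hleast
      have hfC : ∀ t, f t ∈ C := fun t => (hf t).1.1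
      have hfext : ∀ t, t ≤ f t := fun t => (hf t).1.2
      have hfix : ∀ c ∈ C, f c = c := fun c hc =>
        le_antisymm ((hf c).2 ⟨hc, le_refl c⟩) (hfext c)
      refine ⟨f, ?_, ?_, hfext, ?_⟩
      · intro a b hab
        exact (hf a).2 ⟨hfC b, le_trans hab (hfext b)⟩
      · intro x
        exact hfix (f x) (hfC x)
      · apply Set.eq_of_subset_of_subset
        · rintro _ ⟨x, rfl⟩; exact hfC x
        · intro c hc; exact ⟨c, hfix c hc⟩
  · intro f hmono hidem hext hrange t
    have hfix : ∀ c ∈ C, f c = c := by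
      intro c hc
      rw [← hrange] at hc
      obtain ⟨c', rfl⟩ := hc
      exact hidem c'
    have hftC : f t ∈ C := hrange ▸ ⟨t, rfl⟩
    refine ⟨⟨hext t, fun c hc htc => ?_⟩, fun z hz => hz.2 (f t) hftC (hext t)⟩
    calc f t ≤ f c := hmono htc
      _ = c := hfix c hc
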